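/- Let d ≥ 2, let (A_i)_{i=1}^{d²} be a COB on ℂ^d, let m_i be the smallest eigenvalue of A_i, τ := max_i |m_i|, and λ* := 1/(1 + d²τ). Then for every real λ with 0 < λ ≤ λ*, the matrices G_i := λ·A_i + ((1−λ)/d²)·I (i = 1,…,d²) form a GSIC POVM: each G_i is positive semidefinite, ∑_{i=1}^{d²} G_i = I, tr(G_i²) = λ²/d + (1−λ²)/d³ for every i, and tr(G_i G_j) = (1−λ²)/d³ for every i ≠ j. -/

import Mathlib

open scoped ComplexOrder

/-- From any COB `(A i)` on `ℂ^d` and any `0 < λ ≤ λ*`, the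
matrices `G i := λ • A i + ((1-λ)/d²) • I` form a GSIC POVM with constants
`a = λ²/d + (1-λ²)/d³` and `b = (1-λ²)/d³`. -/
theorem cob_to_gsic (d : ℕ) (hd : 2 ≤ d)
    (A : Fin (d ^ 2) → Matrix (Fin d) (Fin d) ℂ)
    (hherm : ∀ i, (A i).IsHermitian)
    (horth : ∀ i j, (A i * A j).trace = if i = j then (1 / (d : ℂ)) else 0)
    (hsum : ∑ i, A i = 1)
    (m : Fin (d ^ 2) → ℝ) (hm : ∀ i, m i = ⨅ k, (hherm i).eigenvalues k)
    (τ : ℝ) (hτ : τ = ⨆ i, |m i|)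
    (lamStar : ℝ) (hlamStar : lamStar = 1 / (1 + d ^ 2 * τ))
    (l : ℝ) (hl0 : 0 < l) (hl : l ≤ lamStar)
    (G : Fin (d ^ 2) → Matrix (Fin d) (Fin d) ℂ)
    (hG : ∀ i, G i = (l : ℂ) • A i +
      (((1 - l) / d ^ 2 : ℝ) : ℂ) • (1 : Matrix (Fin d) (Fin d) ℂ)) :
    (∀ i, (G i).PosSemidef) ∧
    (∑ i, G i = 1) ∧
    (∀ i, (G i * G i).trace = ((l ^ 2 / d + (1 - l ^ 2) / d ^ 3 : ℝ) : ℂ)) ∧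
    (∀ i j, i ≠ j → (G i * G j).trace = (((1 - l ^ 2) / d ^ 3 : ℝ) : ℂ)) := by
  have hd0 : (0:ℝ) < d := by positivity
  have hdn : 0 < d := by omega
  haveI : Nonempty (Fin d) := ⟨⟨0, hdn⟩⟩
  haveI : Nonempty (Fin (d^2)) := ⟨⟨0, by positivity⟩⟩
  set c : ℝ := (1 - l) / d ^ 2 with hc
  -- τ nonneg and key inequality
  have hτ0 : 0 ≤ τ := by
    rw [hτ]
    exact le_ciSup_of_le (Set.Finite.bddAbove (Set.finite_range _)) (Classical.arbitrary _)
      (abs_nonneg _)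
  have hden : (0:ℝ) < 1 + d ^ 2 * τ := by positivity
  have hkey : l * (1 + d ^ 2 * τ) ≤ 1 := by
    rw [hlamStar] at hl
    calc l * (1 + d ^ 2 * τ) ≤ (1 / (1 + d ^ 2 * τ)) * (1 + d ^ 2 * τ) := by
          apply mul_le_mul_of_nonneg_right hl hden.le
      _ = 1 := by field_simp
  -- eigenvalue lower bound
  have heig : ∀ i k, 0 ≤ l * (hherm i).eigenvalues k + c := by
    intro i k
    have h1 : m i ≤ (hherm i).eigenvalues k := by
      rw [hm]
      exact ciInf_le (Set.finite_range ((hherm i).eigenvalues)).bddBelow k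
    have h2 : |m i| ≤ τ := by
      rw [hτ]
      exact le_ciSup (Set.finite_range (fun j => |m j|)).bddAbove i
    have h3 : -τ ≤ (hherm i).eigenvalues k := by
      have := neg_abs_le (m i); linarith
    have hd2 : (0:ℝ) < (d:ℝ)^2 := by positivity
    have h5 : l * τ ≤ c := by rw [hc, le_div_iff₀ hd2]; nlinarith
    have h6 : -(l * τ) ≤ l * (hherm i).eigenvalues k := by nlinarith
    linarith
  have hpos : ∀ i, (G i).PosSemidef := by
    intro i
    have hA := hherm i
    rw [hG i]
    have hspec := hA.spectral_theorem
    rw [Unitary.conjStarAlgAut_apply] at hspec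
    set U : Matrix (Fin d) (Fin d) ℂ := (hA.eigenvectorUnitary : Matrix (Fin d) (Fin d) ℂ)
    have hU : U * star U = 1 := (Matrix.mem_unitaryGroup_iff).mp hA.eigenvectorUnitary.2
    have : (l : ℂ) • A i + (c : ℂ) • (1 : Matrix (Fin d) (Fin d) ℂ)
        = U * (Matrix.diagonal fun k => ((l * hA.eigenvalues k + c : ℝ) : ℂ)) * star U := by
      calc (l : ℂ) • A i + (c : ℂ) • (1 : Matrix (Fin d) (Fin d) ℂ)
          = (l : ℂ) • (U * Matrix.diagonal (RCLike.ofReal ∘ hA.eigenvalues) * star U)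
            + (c : ℂ) • (U * 1 * star U) := by
            rw [← hspec, mul_one, hU]
        _ = U * ((l : ℂ) • Matrix.diagonal (RCLike.ofReal ∘ hA.eigenvalues)
              + (c : ℂ) • (1 : Matrix (Fin d) (Fin d) ℂ)) * star U := by
            rw [Matrix.mul_add, Matrix.add_mul]
            simp [Matrix.smul_mul, Matrix.mul_smul]
        _ = _ := by
            congr 2
            ext j k
            by_cases h : j = k <;>
              simp [Matrix.diagonal_apply, Matrix.one_apply, h] <;> push_cast <;> ring
    rw [this]
    exact (Matrix.posSemidef_diagonal_iff.mpr fun k => by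
      simpa using Complex.zero_le_real.mpr (heig i k)).mul_mul_conjTranspose_same U
  have hdC : (d:ℂ) ≠ 0 := Nat.cast_ne_zero.mpr (by omega)
  have htrA : ∀ i, (A i).trace = 1 / (d:ℂ) := by
    intro i
    calc (A i).trace = (A i * ∑ j, A j).trace := by rw [hsum, mul_one]
      _ = ∑ j, (A i * A j).trace := by rw [Finset.mul_sum, Matrix.trace_sum]
      _ = ∑ j, if i = j then (1 / (d:ℂ)) else 0 := by simp_rw [horth]
      _ = 1 / (d:ℂ) := by simp
  have htr : ∀ i j, (G i * G j).trace
      = (l:ℂ)^2 * (if i = j then (1 / (d:ℂ)) else 0)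
        + (l:ℂ) * (c:ℂ) * (2 / d) + (c:ℂ)^2 * d := by
    intro i j
    rw [hG i, hG j]
    simp only [Matrix.add_mul, Matrix.mul_add, Matrix.smul_mul, Matrix.mul_smul,
      Matrix.mul_one, Matrix.one_mul, Matrix.trace_add, Matrix.trace_smul,
      Matrix.trace_one, smul_eq_mul, horth, htrA]
    push_cast
    simp only [Finset.card_univ, Fintype.card_fin]
    ring
  refine ⟨hpos, ?_, ?_, ?_⟩
  · have hstep : ∑ i, G i = (l:ℂ) • (1 : Matrix (Fin d) (Fin d) ℂ)
        + (d^2 : ℕ) • ((c:ℂ) • (1 : Matrix (Fin d) (Fin d) ℂ)) := by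
      simp_rw [hG]
      rw [Finset.sum_add_distrib, ← Finset.smul_sum, hsum, Finset.sum_const,
        Finset.card_univ, Fintype.card_fin]
    rw [hstep, ← Nat.cast_smul_eq_nsmul ℂ, smul_smul, ← add_smul]
    convert one_smul ℂ (1 : Matrix (Fin d) (Fin d) ℂ) using 2
    rw [hc]
    push_cast
    field_simp
    ring
  · intro i
    rw [htr i i, if_pos rfl, hc]
    push_cast
    field_simp
    ring
  · intro i j hij
    rw [htr i j, if_neg hij, hc]
    push_cast
    field_simp
    ring
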